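/- arXiv:2407.11521 — 2 statements merged into one kernel-verified Lean document; each statement's English description precedes it below -/
import Mathlib

section
/- Let G be a simple graph on n vertices, {a,b} an edge of G, and G' = G − {a,b}. Let G* and G'_* be the augmented graphs of G and G' (sharing the universal vertex u*), let M* be a Moore–Penrose pseudoinverse of L_{G*}, and let r* = M*[a,a] − 2·M*[a,b] + M*[b,b]. If r* ≠ 1, then the marginal loss of the forest index satisfies R_f(G') − R_f(G) = (n/(1 − r*))·Σ_{w ∈ V∪{u*}} (M*[w,a] − M*[w,b])² − ((n+1)/(1 − r*))·(M*[u*,a] − M*[u*,b])². -/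
open Matrix BigOperators

/-- `M` is a Moore–Penrose pseudoinverse of `L`. -/
def IsMoorePenrose {n : Type*} [Fintype n] (L M : Matrix n n ℝ) : Prop :=
  L * M * L = L ∧ M * L * M = M ∧ (L * M)ᵀ = L * M ∧ (M * L)ᵀ = M * L

/-- The augmented graph `G*` of `G`: a new universal vertex `none` is joined
to every vertex of `G`. -/
def augment {V : Type*} (G : SimpleGraph V) : SimpleGraph (Option V) :=
  SimpleGraph.fromRel fun x y =>
    (∃ u v, x = some u ∧ y = some v ∧ G.Adj u v) ∨ x = none ∨ y = none

instance augmentAdjDecidable {V : Type*} [Fintype V] [DecidableEq V]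
    (G : SimpleGraph V) [DecidableRel G.Adj] : DecidableRel (augment G).Adj :=
  fun x y => decidable_of_iff' _ (SimpleGraph.fromRel_adj _ x y)

instance deleteEdgeAdjDecidable {V : Type*} [DecidableEq V]
    (G : SimpleGraph V) [DecidableRel G.Adj] (a b : V) :
    DecidableRel (G.deleteEdges {s(a, b)}).Adj := fun x y =>
  decidable_of_iff (G.Adj x y ∧ ¬s(x, y) = s(a, b)) (by simp)

/-- The forest index `R_f(G) = ∑_{u<v} (Ω[u,u] - 2 Ω[u,v] + Ω[v,v])`,
where `Ω = (L_G + I)⁻¹` is the forest matrix. -/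
noncomputable def forestIndex {n : ℕ} (G : SimpleGraph (Fin n)) [DecidableRel G.Adj] : ℝ :=
  ∑ u : Fin n, ∑ v ∈ Finset.Ioi u,
    ((G.lapMatrix ℝ + 1)⁻¹ u u - 2 * (G.lapMatrix ℝ + 1)⁻¹ u v + (G.lapMatrix ℝ + 1)⁻¹ v v)

/-! ### Auxiliary lemmas -/

lemma isMoorePenrose_unique {m : Type*} [Fintype m] [DecidableEq m]
    {L B C : Matrix m m ℝ} (hB : IsMoorePenrose L B) (hC : IsMoorePenrose L C) : B = C := by
  obtain ⟨hB1, hB2, hB3, hB4⟩ := hB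
  obtain ⟨hC1, hC2, hC3, hC4⟩ := hC
  have h1 : L * B = L * C := by
    calc L * B = (L * C * L) * B := by rw [hC1]
      _ = ((L * B) * (L * C))ᵀ := by
            rw [transpose_mul, hB3, hC3]; noncomm_ring
      _ = ((L * B * L) * C)ᵀ := by noncomm_ring
      _ = (L * C)ᵀ := by rw [hB1]
      _ = L * C := hC3
  have h2 : B * L = C * L := by
    calc B * L = B * (L * C * L) := by rw [hC1]
      _ = ((C * L) * (B * L))ᵀ := by
            rw [transpose_mul, hB4, hC4]; noncomm_ring
      _ = (C * (L * B * L))ᵀ := by noncomm_ring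
      _ = (C * L)ᵀ := by rw [hB1]
      _ = C * L := hC4
  calc B = B * L * B := hB2.symm
    _ = B * (L * C) := by rw [← h1, Matrix.mul_assoc]
    _ = (B * L) * C := by noncomm_ring
    _ = (C * L) * C := by rw [h2]
    _ = C := hC2

lemma sum_Ioi_symm {n : ℕ} (F : Fin n → Fin n → ℝ) (hs : ∀ u v, F u v = F v u) :
    ∑ u, ∑ v ∈ Finset.Ioi u, F u v = ∑ u, ∑ v ∈ Finset.Iio u, F u v := by
  rw [Finset.sum_sigma', Finset.sum_sigma']
  exact Finset.sum_nbij' (fun p => ⟨p.2, p.1⟩) (fun p => ⟨p.2, p.1⟩)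
    (by intro p hp; simp_all [Finset.mem_sigma]) (by intro p hp; simp_all [Finset.mem_sigma])
    (by intros; rfl) (by intros; rfl) (by intro p hp; exact hs p.1 p.2)

lemma two_mul_sum_Ioi {n : ℕ} (F : Fin n → Fin n → ℝ) (hs : ∀ u v, F u v = F v u)
    (hd : ∀ u, F u u = 0) :
    2 * (∑ u, ∑ v ∈ Finset.Ioi u, F u v) = ∑ u, ∑ v, F u v := by
  have huniv : ∀ u : Fin n, ∑ v, F u v = ∑ v ∈ Finset.Iio u, F u v + ∑ v ∈ Finset.Ioi u, F u v := by
    intro u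
    have hu : (Finset.univ : Finset (Fin n)) = insert u (Finset.Iio u ∪ Finset.Ioi u) := by
      ext v
      simp only [Finset.mem_univ, Finset.mem_insert, Finset.mem_union, Finset.mem_Iio,
        Finset.mem_Ioi, true_iff]
      rcases lt_trichotomy v u with h|h|h
      · exact Or.inr (Or.inl h)
      · exact Or.inl h
      · exact Or.inr (Or.inr h)
    rw [hu, Finset.sum_insert (by simp), hd, Finset.sum_union (by
      rw [Finset.disjoint_left]
      intro x h1 h2
      exact absurd (Finset.mem_Ioi.mp h2) (not_lt_of_gt (Finset.mem_Iio.mp h1)))]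
    ring
  rw [Finset.sum_congr rfl (fun u _ => huniv u), Finset.sum_add_distrib,
    ← sum_Ioi_symm F hs]
  ring

lemma pair_sum_sq {n : ℕ} (g : Fin n → ℝ) :
    2 * ∑ u, ∑ v ∈ Finset.Ioi u, (g u - g v) ^ 2
      = 2 * ((n : ℝ) * ∑ u, g u ^ 2 - (∑ u, g u) ^ 2) := by
  rw [two_mul_sum_Ioi _ (fun u v => by ring) (fun u => by ring)]
  have key : ∀ u, ∑ v, (g u - g v) ^ 2
      = (n : ℝ) * g u ^ 2 - 2 * g u * (∑ v, g v) + ∑ v, g v ^ 2 := by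
    intro u
    simp only [sub_sq]
    rw [Finset.sum_add_distrib, Finset.sum_sub_distrib, Finset.sum_const, ← Finset.mul_sum]
    simp only [Finset.card_univ, Fintype.card_fin, nsmul_eq_mul]
  rw [Finset.sum_congr rfl (fun u _ => key u)]
  rw [Finset.sum_add_distrib, Finset.sum_sub_distrib, ← Finset.sum_mul, Finset.sum_const,
    ← Finset.mul_sum]
  simp only [Finset.card_univ, Fintype.card_fin, nsmul_eq_mul]
  rw [show (∑ i : Fin n, 2 * g i) = 2 * ∑ i : Fin n, g i from by rw [Finset.mul_sum]]
  ring

section AugmentLemmas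

variable {V : Type*} [Fintype V] [DecidableEq V] (G : SimpleGraph V) [DecidableRel G.Adj]

omit [Fintype V] [DecidableEq V] [DecidableRel G.Adj] in
lemma augment_adj_some_some (u v : V) : (augment G).Adj (some u) (some v) ↔ G.Adj u v := by
  simp only [augment, SimpleGraph.fromRel_adj]
  constructor
  · rintro ⟨hne, h | h⟩
    · rcases h with ⟨x, y, hx, hy, h⟩ | h | h
      · rw [Option.some.injEq] at hx hy; subst hx; subst hy; exact h
      · exact absurd h (by simp)
      · exact absurd h (by simp)
    · rcases h with ⟨x, y, hx, hy, h⟩ | h | h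
      · rw [Option.some.injEq] at hx hy; subst hx; subst hy; exact h.symm
      · exact absurd h (by simp)
      · exact absurd h (by simp)
  · intro h
    exact ⟨by simpa using h.ne, Or.inl (Or.inl ⟨u, v, rfl, rfl, h⟩)⟩

omit [Fintype V] [DecidableEq V] [DecidableRel G.Adj] in
lemma augment_adj_some_none (u : V) : (augment G).Adj (some u) none := by
  simp only [augment, SimpleGraph.fromRel_adj]
  refine ⟨by simp, Or.inl (Or.inr (Or.inr trivial))⟩

omit [Fintype V] [DecidableEq V] [DecidableRel G.Adj] in
lemma augment_adj_none_some (v : V) : (augment G).Adj none (some v) :=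
  (augment_adj_some_none G v).symm

lemma lapMatrix_apply' (i j : V) :
    G.lapMatrix ℝ i j = (if i = j then (G.degree i : ℝ) else 0) - (if G.Adj i j then 1 else 0) := by
  simp [SimpleGraph.lapMatrix, SimpleGraph.degMatrix, Matrix.diagonal_apply]

lemma augment_degree_some (u : V) :
    (augment G).degree (some u) = G.degree u + 1 := by
  have h : (augment G).neighborFinset (some u) = insert none ((G.neighborFinset u).image some) := by
    ext x
    cases x with
    | none => simp [augment_adj_some_none]
    | some v => simp [augment_adj_some_some]
  rw [SimpleGraph.degree, h, Finset.card_insert_of_notMem (by simp),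
    Finset.card_image_of_injective _ (Option.some_injective V)]
  rfl

lemma augment_degree_none :
    (augment G).degree (none : Option V) = Fintype.card V := by
  have h : (augment G).neighborFinset (none : Option V) = Finset.univ.image some := by
    ext x
    cases x with
    | none => simp [SimpleGraph.irrefl]
    | some v => simp [augment_adj_none_some]
  rw [SimpleGraph.degree, h, Finset.card_image_of_injective _ (Option.some_injective V)]
  simp

lemma posDef_lap_add_one : Matrix.PosDef (G.lapMatrix ℝ + 1) := by
  have hps := SimpleGraph.posSemidef_lapMatrix ℝ G
  exact Matrix.PosDef.posSemidef_add hps Matrix.PosDef.one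

lemma lap_add_one_det_unit : IsUnit (G.lapMatrix ℝ + 1).det :=
  isUnit_iff_ne_zero.mpr (ne_of_gt (posDef_lap_add_one G).det_pos)

lemma lap_add_one_mul_inv : (G.lapMatrix ℝ + 1) * (G.lapMatrix ℝ + 1)⁻¹ = 1 :=
  Matrix.mul_nonsing_inv _ (lap_add_one_det_unit G)

lemma lap_add_one_inv_mul : (G.lapMatrix ℝ + 1)⁻¹ * (G.lapMatrix ℝ + 1) = 1 :=
  Matrix.nonsing_inv_mul _ (lap_add_one_det_unit G)

lemma lap_add_one_inv_symm : (G.lapMatrix ℝ + 1)⁻¹ᵀ = (G.lapMatrix ℝ + 1)⁻¹ := by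
  rw [Matrix.transpose_nonsing_inv]
  congr 1
  rw [Matrix.transpose_add, Matrix.transpose_one]
  congr 1
  exact (SimpleGraph.isSymm_lapMatrix ℝ G)

lemma Lstar_some_some (u v : V) :
    (augment G).lapMatrix ℝ (some u) (some v) = (G.lapMatrix ℝ + 1) u v := by
  rw [lapMatrix_apply' (augment G), Matrix.add_apply, Matrix.one_apply, lapMatrix_apply' G]
  by_cases h : u = v
  · subst h
    simp [augment_degree_some, augment_adj_some_some, SimpleGraph.irrefl]
  · simp [h, augment_adj_some_some]

lemma Lstar_some_none (u : V) : (augment G).lapMatrix ℝ (some u) none = -1 := by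
  rw [lapMatrix_apply']
  simp [augment_adj_some_none]

lemma Lstar_none_some (v : V) : (augment G).lapMatrix ℝ none (some v) = -1 := by
  rw [lapMatrix_apply']
  simp [augment_adj_none_some]

lemma Lstar_none_none :
    (augment G).lapMatrix ℝ (none : Option V) none = Fintype.card V := by
  rw [lapMatrix_apply']
  simp [augment_degree_none, SimpleGraph.irrefl]

/-- Row sums of the forest matrix are 1. -/
lemma forest_row_sum (u : V) : ∑ v, (G.lapMatrix ℝ + 1)⁻¹ u v = 1 := by
  have h1 : (G.lapMatrix ℝ + 1) *ᵥ (fun _ => 1) = fun _ => 1 := by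
    rw [Matrix.add_mulVec, SimpleGraph.lapMatrix_mulVec_const_eq_zero, Matrix.one_mulVec]
    simp
  have h2 : (G.lapMatrix ℝ + 1)⁻¹ *ᵥ (fun _ => 1) = fun _ => 1 := by
    conv_lhs => rw [← h1, Matrix.mulVec_mulVec, lap_add_one_inv_mul, Matrix.one_mulVec]
  have := congrFun h2 u
  simpa [Matrix.mulVec, dotProduct] using this

lemma forest_col_sum (v : V) : ∑ u, (G.lapMatrix ℝ + 1)⁻¹ u v = 1 := by
  have h : ∀ u, (G.lapMatrix ℝ + 1)⁻¹ u v = (G.lapMatrix ℝ + 1)⁻¹ v u := fun u =>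
    (congrFun (congrFun (lap_add_one_inv_symm G) u) v).symm
  simp_rw [h]
  exact forest_row_sum G v

lemma lap_row_sum (u : V) : ∑ v, G.lapMatrix ℝ u v = 0 := by
  have := congrFun (SimpleGraph.lapMatrix_mulVec_const_eq_zero (R := ℝ) G) u
  simpa [Matrix.mulVec, dotProduct] using this

lemma lap_add_one_col_sum (v : V) : ∑ u, (G.lapMatrix ℝ + 1) u v = 1 := by
  have hsym : ∀ u, (G.lapMatrix ℝ) u v = (G.lapMatrix ℝ) v u := fun u =>
    (congrFun (congrFun (SimpleGraph.isSymm_lapMatrix ℝ G) u) v).symm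
  simp_rw [Matrix.add_apply, Finset.sum_add_distrib]
  rw [Finset.sum_congr rfl fun u _ => hsym u, lap_row_sum]
  simp [Matrix.one_apply, Finset.sum_ite_eq]

/-- candidate Moore-Penrose pseudoinverse of the augmented Laplacian. -/
noncomputable def Nmat : Matrix (Option V) (Option V) ℝ :=
  Matrix.of fun x y =>
    match x, y with
    | some u, some v => (G.lapMatrix ℝ + 1)⁻¹ u v
        - ((Fintype.card V : ℝ) + 2) / ((Fintype.card V : ℝ) + 1) ^ 2
    | some _, none => -1 / ((Fintype.card V : ℝ) + 1) ^ 2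
    | none, some _ => -1 / ((Fintype.card V : ℝ) + 1) ^ 2
    | none, none => (Fintype.card V : ℝ) / ((Fintype.card V : ℝ) + 1) ^ 2

lemma Nmat_symm : (Nmat G)ᵀ = Nmat G := by
  have hsym : ∀ u v : V, (G.lapMatrix ℝ + 1)⁻¹ u v = (G.lapMatrix ℝ + 1)⁻¹ v u := fun u v =>
    (congrFun (congrFun (lap_add_one_inv_symm G) u) v).symm
  ext x y
  cases x <;> cases y <;>
    simp only [Matrix.transpose_apply, Nmat, Matrix.of_apply]
  rw [hsym]

lemma Nmat_mul_Lstar :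
    Nmat G * (augment G).lapMatrix ℝ
      = 1 - (1 / ((Fintype.card V : ℝ) + 1)) • Matrix.of (fun _ _ => (1 : ℝ)) := by
  have hc : ((Fintype.card V : ℝ) + 1) ≠ 0 := by positivity
  ext x y
  rw [Matrix.mul_apply, Fintype.sum_option]
  cases x with
  | none =>
    cases y with
    | none =>
      simp only [Nmat, Matrix.of_apply, Lstar_none_none, Lstar_some_none, Matrix.sub_apply,
        Matrix.one_apply_eq, Matrix.smul_apply, smul_eq_mul, Finset.sum_const,
        Finset.card_univ, nsmul_eq_mul]
      field_simp
      ring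
    | some v =>
      simp only [Nmat, Matrix.of_apply, Lstar_none_some, Lstar_some_some, Matrix.sub_apply,
        Matrix.one_apply, Matrix.smul_apply, smul_eq_mul]
      rw [if_neg (show ¬(none : Option V) = some v by simp)]
      rw [← Finset.mul_sum, lap_add_one_col_sum]
      field_simp
      ring
  | some u =>
    cases y with
    | none =>
      simp only [Nmat, Matrix.of_apply, Lstar_none_none, Lstar_some_none, Matrix.sub_apply,
        Matrix.one_apply, Matrix.smul_apply, smul_eq_mul]
      rw [if_neg (show ¬(some u : Option V) = none by simp)]
      rw [Finset.sum_congr rfl (fun w _ => show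
        ((G.lapMatrix ℝ + 1)⁻¹ u w - ((Fintype.card V : ℝ) + 2) / ((Fintype.card V : ℝ) + 1) ^ 2)
            * (-1)
          = -((G.lapMatrix ℝ + 1)⁻¹ u w)
            + ((Fintype.card V : ℝ) + 2) / ((Fintype.card V : ℝ) + 1) ^ 2 from by ring),
        Finset.sum_add_distrib, Finset.sum_neg_distrib, forest_row_sum, Finset.sum_const,
        Finset.card_univ, nsmul_eq_mul]
      field_simp
      ring
    | some v =>
      have hδ : ∑ w, (G.lapMatrix ℝ + 1)⁻¹ u w * (G.lapMatrix ℝ + 1) w v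
          = if u = v then (1 : ℝ) else 0 := by
        have h := congrFun (congrFun (lap_add_one_inv_mul G) u) v
        rw [Matrix.mul_apply] at h
        rw [h, Matrix.one_apply]
      simp only [Nmat, Matrix.of_apply, Lstar_none_some, Lstar_some_some, Matrix.sub_apply,
        Matrix.one_apply, Matrix.smul_apply, smul_eq_mul, Option.some.injEq]
      simp only [sub_mul, Finset.sum_sub_distrib, hδ, ← Finset.mul_sum, lap_add_one_col_sum]
      by_cases h : u = v <;> simp only [h, if_true, if_false] <;> (field_simp; ring)

lemma lap_row_sum' (H : SimpleGraph V) [DecidableRel H.Adj] (u : V) :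
    ∑ v, H.lapMatrix ℝ u v = 0 := by
  have := congrFun (SimpleGraph.lapMatrix_mulVec_const_eq_zero (R := ℝ) H) u
  simpa [Matrix.mulVec, dotProduct] using this

lemma ones_mul_Lstar :
    Matrix.of (fun _ _ => (1 : ℝ)) * (augment G).lapMatrix ℝ = 0 := by
  ext x y
  rw [Matrix.mul_apply]
  simp only [Matrix.of_apply, one_mul, Matrix.zero_apply]
  have hsym : ∀ z, (augment G).lapMatrix ℝ z y = (augment G).lapMatrix ℝ y z := fun z =>
    (congrFun (congrFun (SimpleGraph.isSymm_lapMatrix ℝ (augment G)) z) y).symm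
  rw [Finset.sum_congr rfl fun z _ => hsym z]
  exact lap_row_sum' (augment G) y

lemma ones_mul_Nmat : Matrix.of (fun _ _ => (1 : ℝ)) * Nmat G = 0 := by
  have hc : ((Fintype.card V : ℝ) + 1) ≠ 0 := by positivity
  ext x y
  rw [Matrix.mul_apply]
  simp only [Matrix.of_apply, one_mul, Matrix.zero_apply]
  rw [Fintype.sum_option]
  cases y with
  | none =>
    simp only [Nmat, Matrix.of_apply, Finset.sum_const, Finset.card_univ, nsmul_eq_mul]
    field_simp
    ring
  | some v =>
    simp only [Nmat, Matrix.of_apply, Finset.sum_sub_distrib, forest_col_sum,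
      Finset.sum_const, Finset.card_univ, nsmul_eq_mul]
    field_simp
    ring

lemma Lstar_mul_Nmat :
    (augment G).lapMatrix ℝ * Nmat G
      = 1 - (1 / ((Fintype.card V : ℝ) + 1)) • Matrix.of (fun _ _ => (1 : ℝ)) := by
  have h1 : ((augment G).lapMatrix ℝ * Nmat G)ᵀ = (Nmat G)ᵀ * ((augment G).lapMatrix ℝ)ᵀ :=
    Matrix.transpose_mul _ _
  have h2 : ((augment G).lapMatrix ℝ * Nmat G)ᵀ = Nmat G * (augment G).lapMatrix ℝ := by
    rw [h1, Nmat_symm, (SimpleGraph.isSymm_lapMatrix ℝ (augment G))]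
  have h3 := congrArg Matrix.transpose h2
  rw [Matrix.transpose_transpose] at h3
  rw [h3, Nmat_mul_Lstar, Matrix.transpose_sub, Matrix.transpose_one, Matrix.transpose_smul]
  congr 1

lemma isMoorePenrose_Nmat : IsMoorePenrose ((augment G).lapMatrix ℝ) (Nmat G) := by
  refine ⟨?_, ?_, ?_, ?_⟩
  · rw [Lstar_mul_Nmat, Matrix.sub_mul, Matrix.one_mul, Matrix.smul_mul, ones_mul_Lstar,
      smul_zero, sub_zero]
  · rw [Nmat_mul_Lstar, Matrix.sub_mul, Matrix.one_mul, Matrix.smul_mul, ones_mul_Nmat,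
      smul_zero, sub_zero]
  · rw [Lstar_mul_Nmat, Matrix.transpose_sub, Matrix.transpose_one, Matrix.transpose_smul]
    congr 1
  · rw [Nmat_mul_Lstar, Matrix.transpose_sub, Matrix.transpose_one, Matrix.transpose_smul]
    congr 1

/-- indicator difference vector -/
def eab (a b : V) : V → ℝ := fun i => (if i = a then 1 else 0) - (if i = b then 1 else 0)

variable {G} in
lemma deleteEdges_degree_left {a b : V} (hab : G.Adj a b) :
    ((G.deleteEdges {s(a, b)}).degree a : ℝ) = G.degree a - 1 := by
  have hne : a ≠ b := G.ne_of_adj hab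
  have hN : (G.deleteEdges {s(a, b)}).neighborFinset a = (G.neighborFinset a).erase b := by
    ext x
    simp only [SimpleGraph.mem_neighborFinset, SimpleGraph.deleteEdges_adj,
      Set.mem_singleton_iff, Finset.mem_erase, Sym2.eq_iff]
    tauto
  have hpos : 1 ≤ (G.neighborFinset a).card :=
    Finset.card_pos.mpr ⟨b, (SimpleGraph.mem_neighborFinset _ _ _).mpr hab⟩
  rw [SimpleGraph.degree, hN, Finset.card_erase_of_mem
    ((SimpleGraph.mem_neighborFinset _ _ _).mpr hab), Nat.cast_sub hpos,
    SimpleGraph.card_neighborFinset_eq_degree]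
  norm_num

variable {G} in
lemma deleteEdges_degree_right {a b : V} (hab : G.Adj a b) :
    ((G.deleteEdges {s(a, b)}).degree b : ℝ) = G.degree b - 1 := by
  have hne : a ≠ b := G.ne_of_adj hab
  have hN : (G.deleteEdges {s(a, b)}).neighborFinset b = (G.neighborFinset b).erase a := by
    ext x
    simp only [SimpleGraph.mem_neighborFinset, SimpleGraph.deleteEdges_adj,
      Set.mem_singleton_iff, Finset.mem_erase, Sym2.eq_iff]
    tauto
  have hpos : 1 ≤ (G.neighborFinset b).card :=
    Finset.card_pos.mpr ⟨a, (SimpleGraph.mem_neighborFinset _ _ _).mpr hab.symm⟩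
  rw [SimpleGraph.degree, hN, Finset.card_erase_of_mem
    ((SimpleGraph.mem_neighborFinset _ _ _).mpr hab.symm), Nat.cast_sub hpos,
    SimpleGraph.card_neighborFinset_eq_degree]
  norm_num

variable {G} in
lemma deleteEdges_degree_other {a b v : V} (hva : v ≠ a) (hvb : v ≠ b) :
    (G.deleteEdges {s(a, b)}).degree v = G.degree v := by
  have hN : (G.deleteEdges {s(a, b)}).neighborFinset v = G.neighborFinset v := by
    ext x
    simp only [SimpleGraph.mem_neighborFinset, SimpleGraph.deleteEdges_adj,
      Set.mem_singleton_iff, Sym2.eq_iff]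
    tauto
  rw [SimpleGraph.degree, hN, SimpleGraph.card_neighborFinset_eq_degree]

variable {G} in
lemma deleteEdges_degree_cast {a b : V} (hab : G.Adj a b) (v : V) :
    ((G.deleteEdges {s(a, b)}).degree v : ℝ) = G.degree v - eab a b v ^ 2 := by
  have hne : a ≠ b := G.ne_of_adj hab
  by_cases hva : v = a
  · subst hva
    rw [deleteEdges_degree_left hab]
    simp [eab, hne]
  · by_cases hvb : v = b
    · subst hvb
      rw [deleteEdges_degree_right hab]
      simp [eab, hva, Ne.symm hne]
    · rw [deleteEdges_degree_other hva hvb]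
      simp [eab, hva, hvb]

variable {G} in
lemma lap_deleteEdges {a b : V} (hab : G.Adj a b) :
    (G.deleteEdges {s(a, b)}).lapMatrix ℝ
      = G.lapMatrix ℝ - Matrix.of (fun i j => eab a b i * eab a b j) := by
  have hne : a ≠ b := G.ne_of_adj hab
  ext i j
  rw [Matrix.sub_apply, Matrix.of_apply, lapMatrix_apply', lapMatrix_apply']
  by_cases hij : i = j
  · subst hij
    rw [if_pos rfl, if_pos rfl, deleteEdges_degree_cast hab,
      if_neg (G.deleteEdges {s(a, b)}).irrefl, if_neg G.irrefl]
    ring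
  · rw [if_neg hij, if_neg hij]
    by_cases hc : (i = a ∧ j = b) ∨ (i = b ∧ j = a)
    · have hsym : s(i, j) = s(a, b) := by
        rcases hc with ⟨h1, h2⟩ | ⟨h1, h2⟩
        · rw [h1, h2]
        · rw [h1, h2]; exact Sym2.eq_swap
      have hadj : G.Adj i j := by
        rcases hc with ⟨h1, h2⟩ | ⟨h1, h2⟩
        · rw [h1, h2]; exact hab
        · rw [h1, h2]; exact hab.symm
      have hnadj : ¬(G.deleteEdges {s(a, b)}).Adj i j := by
        rw [SimpleGraph.deleteEdges_adj]
        rintro ⟨-, hmem⟩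
        exact hmem (Set.mem_singleton_iff.mpr hsym)
      rw [if_neg hnadj, if_pos hadj]
      have he : eab a b i * eab a b j = -1 := by
        rcases hc with ⟨h1, h2⟩ | ⟨h1, h2⟩ <;> rw [h1, h2] <;> simp [eab, hne, Ne.symm hne]
      rw [he]
      ring
    · push_neg at hc
      have hsym : ¬s(i, j) = s(a, b) := by
        rw [Sym2.eq_iff]
        rintro (⟨h1, h2⟩ | ⟨h1, h2⟩)
        · exact (hc.1 h1) h2
        · exact (hc.2 h1) h2
      have hadj : (G.deleteEdges {s(a, b)}).Adj i j ↔ G.Adj i j := by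
        rw [SimpleGraph.deleteEdges_adj]
        simp [hsym]
      have hz : eab a b i * eab a b j = 0 := by
        by_cases h : i = a
        · have hjb : j ≠ b := hc.1 h
          have hja : j ≠ a := fun hx => hij (h.trans hx.symm)
          have hj : eab a b j = 0 := by simp [eab, hja, hjb]
          rw [hj, mul_zero]
        · by_cases h2 : i = b
          · have hja : j ≠ a := hc.2 h2
            have hjb : j ≠ b := fun hx => hij (h2.trans hx.symm)
            have hj : eab a b j = 0 := by simp [eab, hja, hjb]
            rw [hj, mul_zero]
          · have hi : eab a b i = 0 := by simp [eab, h, h2]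
            rw [hi, zero_mul]
      rw [hz, sub_zero]
      by_cases hadj2 : G.Adj i j
      · rw [if_pos (hadj.mpr hadj2), if_pos hadj2]
      · rw [if_neg (fun h => hadj2 (hadj.mp h)), if_neg hadj2]

variable {G} in
lemma forest_inv_deleted {a b : V} (hab : G.Adj a b)
    (hr1 : (1 : ℝ) - ((G.lapMatrix ℝ + 1)⁻¹ a a - 2 * (G.lapMatrix ℝ + 1)⁻¹ a b
      + (G.lapMatrix ℝ + 1)⁻¹ b b) ≠ 0) :
    ((G.deleteEdges {s(a, b)}).lapMatrix ℝ + 1)⁻¹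
      = Matrix.of (fun i j => (G.lapMatrix ℝ + 1)⁻¹ i j
          + (1 / (1 - ((G.lapMatrix ℝ + 1)⁻¹ a a - 2 * (G.lapMatrix ℝ + 1)⁻¹ a b
              + (G.lapMatrix ℝ + 1)⁻¹ b b)))
            * (((G.lapMatrix ℝ + 1)⁻¹ i a - (G.lapMatrix ℝ + 1)⁻¹ i b)
              * ((G.lapMatrix ℝ + 1)⁻¹ j a - (G.lapMatrix ℝ + 1)⁻¹ j b))) := by
  set Ω := (G.lapMatrix ℝ + 1)⁻¹ with hΩ
  set r : ℝ := Ω a a - 2 * Ω a b + Ω b b with hrdef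
  set s : ℝ := 1 / (1 - r) with hsdef
  set g : V → ℝ := fun i => Ω i a - Ω i b with hgdef
  have hΩsymm : ∀ i j, Ω i j = Ω j i := fun i j =>
    (congrFun (congrFun (lap_add_one_inv_symm G) i) j).symm
  have hA : ∀ i j, ∑ k, (G.lapMatrix ℝ + 1) i k * Ω k j = if i = j then (1:ℝ) else 0 := by
    intro i j
    have h := congrFun (congrFun (lap_add_one_mul_inv G) i) j
    rw [Matrix.mul_apply] at h
    rw [h, Matrix.one_apply]
  have hB : ∀ i, ∑ k, (G.lapMatrix ℝ + 1) i k * g k = eab a b i := by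
    intro i
    simp only [hgdef, mul_sub, Finset.sum_sub_distrib, hA, eab]
  have hC : ∀ j, ∑ k, eab a b k * Ω k j = g j := by
    intro j
    simp only [eab, sub_mul, ite_mul, one_mul, zero_mul, Finset.sum_sub_distrib,
      Finset.sum_ite_eq', Finset.mem_univ, if_true, hgdef]
    rw [hΩsymm j a, hΩsymm j b]
  have hD : ∑ k, eab a b k * g k = r := by
    simp only [eab, sub_mul, ite_mul, one_mul, zero_mul, Finset.sum_sub_distrib,
      Finset.sum_ite_eq', Finset.mem_univ, if_true, hgdef, hrdef]
    rw [hΩsymm b a]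
    ring
  apply Matrix.inv_eq_right_inv
  rw [lap_deleteEdges hab]
  ext i j
  rw [Matrix.mul_apply]
  have hterm : ∀ k, ((G.lapMatrix ℝ - Matrix.of (fun i j => eab a b i * eab a b j)) + 1) i k
        * Matrix.of (fun i j => Ω i j + s * (g i * g j)) k j
      = (G.lapMatrix ℝ + 1) i k * Ω k j + ((G.lapMatrix ℝ + 1) i k * g k) * (s * g j)
        - (eab a b k * Ω k j) * eab a b i - (eab a b k * g k) * (s * eab a b i * g j) := by
    intro k
    simp only [Matrix.add_apply, Matrix.sub_apply, Matrix.of_apply]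
    ring
  rw [Finset.sum_congr rfl fun k _ => hterm k]
  simp only [Finset.sum_sub_distrib, Finset.sum_add_distrib, ← Finset.sum_mul, hA, hB, hC, hD]
  rw [Matrix.one_apply]
  have hs1 : s - 1 - s * r = 0 := by
    have h2 : s * (1 - r) = 1 := by
      rw [hsdef]
      exact one_div_mul_cancel hr1
    nlinarith [h2]
  linear_combination (eab a b i * g j) * hs1

end AugmentLemmas

theorem forest_index_marginal_loss {n : ℕ} (G : SimpleGraph (Fin n))
    [DecidableRel G.Adj] (a b : Fin n) (hab : G.Adj a b)
    (M : Matrix (Option (Fin n)) (Option (Fin n)) ℝ)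
    (hM : IsMoorePenrose ((augment G).lapMatrix ℝ) M)
    (hr : M (some a) (some a) - 2 * M (some a) (some b) + M (some b) (some b) ≠ 1) :
    forestIndex (G.deleteEdges {s(a, b)}) - forestIndex G =
      ((n : ℝ) / (1 - (M (some a) (some a) - 2 * M (some a) (some b) + M (some b) (some b)))) *
          ∑ w : Option (Fin n), (M w (some a) - M w (some b)) ^ 2 -
        (((n : ℝ) + 1) / (1 - (M (some a) (some a) - 2 * M (some a) (some b) + M (some b) (some b)))) *
          (M none (some a) - M none (some b)) ^ 2 := by
  have hMN : M = Nmat G := isMoorePenrose_unique hM (isMoorePenrose_Nmat G)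
  subst hMN
  have hss : ∀ u v : Fin n, Nmat G (some u) (some v)
      = (G.lapMatrix ℝ + 1)⁻¹ u v
        - ((Fintype.card (Fin n) : ℝ) + 2) / ((Fintype.card (Fin n) : ℝ) + 1) ^ 2 := fun u v => rfl
  have hns : ∀ v : Fin n, Nmat G none (some v)
      = -1 / ((Fintype.card (Fin n) : ℝ) + 1) ^ 2 := fun v => rfl
  -- abbreviations
  have hrstar : Nmat G (some a) (some a) - 2 * Nmat G (some a) (some b)
        + Nmat G (some b) (some b)
      = (G.lapMatrix ℝ + 1)⁻¹ a a - 2 * (G.lapMatrix ℝ + 1)⁻¹ a b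
        + (G.lapMatrix ℝ + 1)⁻¹ b b := by
    rw [hss, hss, hss]
    ring
  have hr1 : (1 : ℝ) - ((G.lapMatrix ℝ + 1)⁻¹ a a - 2 * (G.lapMatrix ℝ + 1)⁻¹ a b
      + (G.lapMatrix ℝ + 1)⁻¹ b b) ≠ 0 := by
    rw [← hrstar]
    exact sub_ne_zero.mpr (Ne.symm hr)
  have hnone : Nmat G none (some a) - Nmat G none (some b) = 0 := by
    rw [hns, hns]
    ring
  have hsum : ∑ w : Option (Fin n), (Nmat G w (some a) - Nmat G w (some b)) ^ 2
      = ∑ u : Fin n, ((G.lapMatrix ℝ + 1)⁻¹ u a - (G.lapMatrix ℝ + 1)⁻¹ u b) ^ 2 := by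
    rw [Fintype.sum_option, hnone]
    rw [Finset.sum_congr rfl fun u _ => show
      (Nmat G (some u) (some a) - Nmat G (some u) (some b)) ^ 2
        = ((G.lapMatrix ℝ + 1)⁻¹ u a - (G.lapMatrix ℝ + 1)⁻¹ u b) ^ 2 from by
        rw [hss, hss]; ring]
    ring
  set Ω := (G.lapMatrix ℝ + 1)⁻¹ with hΩ
  set r : ℝ := Ω a a - 2 * Ω a b + Ω b b with hrdef
  set g : Fin n → ℝ := fun i => Ω i a - Ω i b with hgdef
  -- the deleted-edge forest matrix
  have hG' := forest_inv_deleted hab hr1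
  -- sum of g is zero
  have hgsum : ∑ u, g u = 0 := by
    simp only [hgdef, Finset.sum_sub_distrib, hΩ, forest_col_sum]
    ring
  -- LHS computation
  have hLHS : forestIndex (G.deleteEdges {s(a, b)}) - forestIndex G
      = (1 / (1 - r)) * ∑ u, ∑ v ∈ Finset.Ioi u, (g u - g v) ^ 2 := by
    rw [forestIndex, forestIndex, ← Finset.sum_sub_distrib, Finset.mul_sum]
    refine Finset.sum_congr rfl fun u _ => ?_
    rw [← Finset.sum_sub_distrib, Finset.mul_sum]
    refine Finset.sum_congr rfl fun v _ => ?_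
    rw [hG']
    simp only [Matrix.of_apply, ← hΩ, ← hrdef, ← hgdef]
    have : (fun i => Ω i a - Ω i b) u = g u := rfl
    ring
  have hpair := pair_sum_sq g
  have hX : ∑ u, ∑ v ∈ Finset.Ioi u, (g u - g v) ^ 2
      = (n : ℝ) * ∑ u, g u ^ 2 := by
    have := hpair
    rw [hgsum] at this
    nlinarith [this]
  rw [hLHS, hX, hrstar, hsum, hnone]
  have hgu : ∑ u : Fin n, g u ^ 2 = ∑ u : Fin n, (Ω u a - Ω u b) ^ 2 := rfl
  rw [hgu]
  field_simp
  ring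
end

section
/- Let G be a simple graph, {a,b} an edge of G, and G' = G − {a,b}. Let G* and G'_* be the augmented graphs of G and G' with universal vertex u*, let M* be a Moore–Penrose pseudoinverse of L_{G*}, M'* a Moore–Penrose pseudoinverse of L_{G'_*}, and r* = M*[a,a] − 2·M*[a,b] + M*[b,b]. If r* ≠ 1, then M*[u*,u*] − M'*[u*,u*] = −(M*[u*,a] − M*[u*,b])² / (1 − r*). -/
open Matrix BigOperators

/-! ### Auxiliary lemmas -/

section Aux

/-- Uniqueness of the Moore–Penrose pseudoinverse. -/
theorem mp_unique {n : Type*} [Fintype n] {L M₁ M₂ : Matrix n n ℝ}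
    (h1 : IsMoorePenrose L M₁) (h2 : IsMoorePenrose L M₂) : M₁ = M₂ := by
  obtain ⟨a1, b1, c1, d1⟩ := h1
  obtain ⟨a2, b2, c2, d2⟩ := h2
  have hLM : L * M₁ = L * M₂ := by
    calc L * M₁ = (L * M₂ * L) * M₁ := by rw [a2]
      _ = (L * M₂) * (L * M₁) := by rw [Matrix.mul_assoc]
      _ = (L * M₂)ᵀ * (L * M₁)ᵀ := by rw [c2, c1]
      _ = ((L * M₁) * (L * M₂))ᵀ := (transpose_mul _ _).symm
      _ = ((L * M₁ * L) * M₂)ᵀ := by rw [Matrix.mul_assoc (L * M₁)]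
      _ = (L * M₂)ᵀ := by rw [a1]
      _ = L * M₂ := c2
  have hML : M₁ * L = M₂ * L := by
    calc M₁ * L = M₁ * (L * M₂ * L) := by rw [a2]
      _ = (M₁ * L) * (M₂ * L) := by rw [Matrix.mul_assoc L M₂ L, ← Matrix.mul_assoc]
      _ = (M₁ * L)ᵀ * (M₂ * L)ᵀ := by rw [d1, d2]
      _ = ((M₂ * L) * (M₁ * L))ᵀ := (transpose_mul _ _).symm
      _ = (M₂ * (L * M₁ * L))ᵀ := by rw [Matrix.mul_assoc M₂ L (M₁ * L), Matrix.mul_assoc L M₁ L]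
      _ = (M₂ * L)ᵀ := by rw [a1]
      _ = M₂ * L := d2
  calc M₁ = M₁ * L * M₁ := b1.symm
    _ = M₂ * L * M₁ := by rw [hML]
    _ = M₂ * (L * M₁) := Matrix.mul_assoc _ _ _
    _ = M₂ * (L * M₂) := by rw [hLM]
    _ = M₂ * L * M₂ := (Matrix.mul_assoc _ _ _).symm
    _ = M₂ := b2

/-- A Moore–Penrose pseudoinverse of a symmetric matrix is symmetric. -/
theorem mp_symm {n : Type*} [Fintype n] {L M : Matrix n n ℝ} (hL : Lᵀ = L)
    (h : IsMoorePenrose L M) : Mᵀ = M := by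
  obtain ⟨a, b, c, d⟩ := h
  have e1 : L * Mᵀ = M * L := by
    calc L * Mᵀ = Lᵀ * Mᵀ := by rw [hL]
      _ = (M * L)ᵀ := (transpose_mul M L).symm
      _ = M * L := d
  have e2 : Mᵀ * L = L * M := by
    calc Mᵀ * L = Mᵀ * Lᵀ := by rw [hL]
      _ = (L * M)ᵀ := (transpose_mul L M).symm
      _ = L * M := c
  have h' : IsMoorePenrose L Mᵀ := by
    refine ⟨?_, ?_, ?_, ?_⟩
    · calc L * Mᵀ * L = Lᵀ * Mᵀ * Lᵀ := by rw [hL]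
        _ = (L * M * L)ᵀ := by
            rw [transpose_mul (L * M) L, transpose_mul L M, Matrix.mul_assoc]
        _ = Lᵀ := by rw [a]
        _ = L := hL
    · calc Mᵀ * L * Mᵀ = Mᵀ * Lᵀ * Mᵀ := by rw [hL]
        _ = (M * L * M)ᵀ := by
            rw [transpose_mul (M * L) M, transpose_mul M L, Matrix.mul_assoc]
        _ = Mᵀ := by rw [b]
    · rw [e1]; exact d
    · rw [e2]; exact c
  exact mp_unique h' ⟨a, b, c, d⟩

theorem matmul_vecMulVec {n : Type*} [Fintype n] (A : Matrix n n ℝ) (u v : n → ℝ) :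
    A * Matrix.vecMulVec u v = Matrix.vecMulVec (A *ᵥ u) v := by
  ext i j
  simp only [Matrix.mul_apply, Matrix.vecMulVec_apply, Matrix.mulVec, dotProduct,
    Finset.sum_mul]
  exact Finset.sum_congr rfl fun k _ => (mul_assoc _ _ _).symm

theorem vecMulVec_matmul {n : Type*} [Fintype n] (A : Matrix n n ℝ) (u v : n → ℝ) :
    Matrix.vecMulVec u v * A = Matrix.vecMulVec u (Aᵀ *ᵥ v) := by
  ext i j
  simp only [Matrix.mul_apply, Matrix.vecMulVec_apply, Matrix.mulVec, dotProduct,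
    Matrix.transpose_apply, Finset.mul_sum]
  exact Finset.sum_congr rfl fun k _ => by ring

theorem vecMulVec_mul_vecMulVec {n : Type*} [Fintype n] (u v u' v' : n → ℝ) :
    Matrix.vecMulVec u v * Matrix.vecMulVec u' v'
      = (v ⬝ᵥ u') • Matrix.vecMulVec u v' := by
  ext i j
  simp only [Matrix.mul_apply, Matrix.vecMulVec_apply, Matrix.smul_apply, dotProduct,
    smul_eq_mul, Finset.sum_mul, Finset.mul_sum]
  exact Finset.sum_congr rfl fun k _ => by ring

theorem vecMulVec_transpose {n : Type*} (u v : n → ℝ) :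
    (Matrix.vecMulVec u v)ᵀ = Matrix.vecMulVec v u := by
  ext i j
  simp [Matrix.vecMulVec_apply, mul_comm]

theorem augment_adj {V : Type*} (G : SimpleGraph V) (x y : Option V) :
    (augment G).Adj x y ↔ x ≠ y ∧
      (x = none ∨ y = none ∨ ∃ u v, x = some u ∧ y = some v ∧ G.Adj u v) := by
  cases x <;> cases y <;>
    simp [augment, SimpleGraph.fromRel_adj, SimpleGraph.adj_comm]

theorem augment_adj_some {V : Type*} (G : SimpleGraph V) (u v : V) :
    (augment G).Adj (some u) (some v) ↔ G.Adj u v := by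
  simp [augment_adj]
  exact fun h h' => h.ne h'

theorem augment_adj_none {V : Type*} (G : SimpleGraph V) (v : V) :
    (augment G).Adj none (some v) := by simp [augment_adj]

theorem augment_delete_adj {V : Type*} (G : SimpleGraph V) (a b : V) (x y : Option V) :
    (augment (G.deleteEdges {s(a, b)})).Adj x y ↔
      (augment G).Adj x y ∧ ¬((x = some a ∧ y = some b) ∨ (x = some b ∧ y = some a)) := by
  cases x <;> cases y <;>
    simp [augment, SimpleGraph.fromRel_adj, SimpleGraph.deleteEdges_adj, Sym2.eq_iff,
      SimpleGraph.adj_comm] <;> tauto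

/-- The signed incidence vector of the edge `{a,b}` inside the augmented graph. -/
def evec {V : Type*} [DecidableEq V] (a b : V) : Option V → ℝ := fun x =>
  if x = some a then 1 else if x = some b then -1 else 0

theorem evec_eq {V : Type*} [DecidableEq V] {a b : V} (hab : a ≠ b) (k : Option V) :
    evec a b k = (if k = some a then (1:ℝ) else 0) + (if k = some b then (-1:ℝ) else 0) := by
  unfold evec
  split_ifs with h1 h2 <;> simp_all

theorem sum_evec {V : Type*} [Fintype V] [DecidableEq V] {a b : V} (hab : a ≠ b) :
    ∑ k : Option V, evec a b k = 0 := by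
  simp [evec_eq hab, Finset.sum_add_distrib]

theorem mulVec_evec {V : Type*} [Fintype V] [DecidableEq V] {a b : V} (hab : a ≠ b)
    (A : Matrix (Option V) (Option V) ℝ) (x : Option V) :
    (A *ᵥ evec a b) x = A x (some a) - A x (some b) := by
  simp only [Matrix.mulVec, dotProduct, evec_eq hab, mul_add, Finset.sum_add_distrib,
    mul_ite, mul_one, mul_neg, mul_zero]
  rw [Finset.sum_ite_eq' Finset.univ (some a), Finset.sum_ite_eq' Finset.univ (some b)]
  simp
  ring

theorem dot_evec {V : Type*} [Fintype V] [DecidableEq V] {a b : V} (hab : a ≠ b)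
    (u : Option V → ℝ) :
    evec a b ⬝ᵥ u = u (some a) - u (some b) := by
  simp only [dotProduct, evec_eq hab, add_mul, Finset.sum_add_distrib,
    ite_mul, one_mul, neg_mul, zero_mul]
  rw [Finset.sum_ite_eq' Finset.univ (some a), Finset.sum_ite_eq' Finset.univ (some b)]
  simp
  ring

theorem lap_entry {W : Type*} [Fintype W] [DecidableEq W] (H : SimpleGraph W)
    [DecidableRel H.Adj] (i j : W) :
    H.lapMatrix ℝ i j = (if i = j then ∑ k, (if H.Adj i k then (1:ℝ) else 0) else 0)
      - (if H.Adj i j then 1 else 0) := by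
  simp [SimpleGraph.lapMatrix, SimpleGraph.degMatrix, Matrix.diagonal_apply,
    SimpleGraph.degree_eq_sum_if_adj]

theorem indicator_delete {V : Type*} [Fintype V] [DecidableEq V] (G : SimpleGraph V)
    [DecidableRel G.Adj] {a b : V} (hab : G.Adj a b) (x y : Option V) (hxy : x ≠ y) :
    (if (augment (G.deleteEdges {s(a, b)})).Adj x y then (1:ℝ) else 0)
      = (if (augment G).Adj x y then (1:ℝ) else 0) + evec a b x * evec a b y := by
  have hne := hab.ne
  by_cases hxa : x = some a
  · subst hxa
    by_cases hyb : y = some b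
    · subst hyb
      have hadj : (augment G).Adj (some a) (some b) := (augment_adj_some G a b).2 hab
      simp [augment_delete_adj, evec, hadj, hne, Ne.symm hne]
    · have hya : y ≠ some a := fun h => hxy h.symm
      simp [augment_delete_adj, evec, hyb, hya, hne]
  · by_cases hxb : x = some b
    · subst hxb
      by_cases hya : y = some a
      · subst hya
        have hadj : (augment G).Adj (some b) (some a) := (augment_adj_some G b a).2 hab.symm
        simp [augment_delete_adj, evec, hadj, hne, Ne.symm hne]
      · have hyb : y ≠ some b := fun h => hxy h.symm
        simp [augment_delete_adj, evec, hya, hyb, hne, Ne.symm hne]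
    · simp [augment_delete_adj, evec, hxa, hxb]

theorem lap_aug_delete {V : Type*} [Fintype V] [DecidableEq V] (G : SimpleGraph V)
    [DecidableRel G.Adj] {a b : V} (hab : G.Adj a b) :
    (augment (G.deleteEdges {s(a, b)})).lapMatrix ℝ
      = (augment G).lapMatrix ℝ - Matrix.vecMulVec (evec a b) (evec a b) := by
  ext i j
  rw [Matrix.sub_apply, Matrix.vecMulVec_apply, lap_entry, lap_entry]
  by_cases hij : i = j
  · subst hij
    have hsum : ∀ k : Option V,
        (if (augment (G.deleteEdges {s(a, b)})).Adj i k then (1:ℝ) else 0)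
        = (if (augment G).Adj i k then (1:ℝ) else 0) + evec a b i * evec a b k
          - (if k = i then evec a b i * evec a b k else 0) := by
      intro k
      by_cases hk : k = i
      · subst hk
        simp [SimpleGraph.irrefl]
      · rw [indicator_delete G hab i k (fun h => hk h.symm), if_neg hk, sub_zero]
    rw [if_pos rfl, if_pos rfl, if_neg (SimpleGraph.irrefl _), if_neg (SimpleGraph.irrefl _)]
    simp only [hsum]
    rw [Finset.sum_sub_distrib, Finset.sum_add_distrib, ← Finset.mul_sum,
      sum_evec hab.ne, Finset.sum_ite_eq' Finset.univ i
        (fun k => evec a b i * evec a b k)]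
    simp
  · rw [if_neg hij, if_neg hij, indicator_delete G hab i j hij]
    ring

theorem evec_mem_range {V : Type*} [Fintype V] [DecidableEq V] (G : SimpleGraph V)
    [DecidableRel G.Adj] {a b : V} (hab : a ≠ b) :
    ∃ z : Option V → ℝ, (augment G).lapMatrix ℝ *ᵥ z = evec a b := by
  classical
  set L := (augment G).lapMatrix ℝ with hL
  set f := Matrix.toLin' L with hf
  set φ : ((Option V) → ℝ) →ₗ[ℝ] ℝ := ∑ i : Option V, LinearMap.proj i with hφ
  have hφ_apply : ∀ x : Option V → ℝ, φ x = ∑ i, x i := by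
    intro x; simp [hφ, LinearMap.sum_apply]
  have hker : LinearMap.ker f = Submodule.span ℝ {fun _ => (1:ℝ)} := by
    apply le_antisymm
    · intro x hx
      rw [LinearMap.mem_ker, hf,
        Matrix.toLin'_apply,
        SimpleGraph.lapMatrix_mulVec_eq_zero_iff_forall_reachable] at hx
      have hconst : ∀ i, x i = x none := by
        intro i
        cases i with
        | none => rfl
        | some v => exact hx (some v) none ((augment_adj_none G v).symm.reachable)
      have hx' : x = (x none) • (fun _ => (1:ℝ)) := funext fun i => by
        simp [hconst i]
      rw [hx']
      exact Submodule.smul_mem _ _ (Submodule.mem_span_singleton_self _)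
    · rw [Submodule.span_le, Set.singleton_subset_iff]
      rw [SetLike.mem_coe, LinearMap.mem_ker, hf, Matrix.toLin'_apply]
      exact (augment G).lapMatrix_mulVec_const_eq_zero
  have hker_rank : Module.finrank ℝ (LinearMap.ker f) = 1 := by
    rw [hker, finrank_span_singleton]
    intro h
    exact one_ne_zero (congrFun h none)
  have hcol : ∀ j, ∑ i, L i j = 0 := by
    intro j
    have hs := (augment G).isSymm_lapMatrix (R := ℝ)
    have h1 := congrFun ((augment G).lapMatrix_mulVec_const_eq_zero (R := ℝ)) j
    simp only [Matrix.mulVec, dotProduct, mul_one, Pi.zero_apply] at h1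
    calc ∑ i, L i j = ∑ i, L j i := Finset.sum_congr rfl fun i _ => hs.apply j i
      _ = 0 := h1
  have hle : LinearMap.range f ≤ LinearMap.ker φ := by
    rintro _ ⟨x, rfl⟩
    rw [LinearMap.mem_ker, hφ_apply, hf]
    simp only [Matrix.toLin'_apply, Matrix.mulVec, dotProduct]
    rw [Finset.sum_comm]
    simp only [← Finset.sum_mul, hcol, zero_mul, Finset.sum_const_zero]
  have hφsurj : Function.Surjective φ := by
    intro c
    refine ⟨Pi.single none c, ?_⟩
    rw [hφ_apply, Finset.sum_pi_single']
    simp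
  have h1 : Module.finrank ℝ (LinearMap.range f) + Module.finrank ℝ (LinearMap.ker f)
      = Fintype.card (Option V) := by
    rw [LinearMap.finrank_range_add_finrank_ker]
    simp [Module.finrank_pi]
  have h2 : Module.finrank ℝ (LinearMap.range φ) + Module.finrank ℝ (LinearMap.ker φ)
      = Fintype.card (Option V) := by
    rw [LinearMap.finrank_range_add_finrank_ker]
    simp [Module.finrank_pi]
  have h3 : Module.finrank ℝ (LinearMap.range φ) = 1 := by
    rw [LinearMap.range_eq_top.2 hφsurj, finrank_top]
    simp
  have heq : LinearMap.range f = LinearMap.ker φ := by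
    apply Submodule.eq_of_le_of_finrank_eq hle
    omega
  have he : evec a b ∈ LinearMap.ker φ := by
    rw [LinearMap.mem_ker, hφ_apply]
    exact sum_evec hab
  rw [← heq] at he
  obtain ⟨z, hz⟩ := he
  exact ⟨z, by rw [← Matrix.toLin'_apply L z, ← hf]; exact hz⟩

end Aux

theorem augmented_pseudoinverse_universal_entry_update {V : Type*} [Fintype V]
    [DecidableEq V] (G : SimpleGraph V) [DecidableRel G.Adj]
    (a b : V) (hab : G.Adj a b)
    (M : Matrix (Option V) (Option V) ℝ)
    (hM : IsMoorePenrose ((augment G).lapMatrix ℝ) M)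
    (M' : Matrix (Option V) (Option V) ℝ)
    (hM' : IsMoorePenrose ((augment (G.deleteEdges {s(a, b)})).lapMatrix ℝ) M')
    (hr : M (some a) (some a) - 2 * M (some a) (some b) + M (some b) (some b) ≠ 1) :
    M none none - M' none none =
      -(M none (some a) - M none (some b)) ^ 2 /
        (1 - (M (some a) (some a) - 2 * M (some a) (some b) + M (some b) (some b))) := by
  classical
  have hne : a ≠ b := hab.ne
  set L := (augment G).lapMatrix ℝ with hLdef
  set e := evec a b with hedef
  have hL' : (augment (G.deleteEdges {s(a, b)})).lapMatrix ℝ = L - Matrix.vecMulVec e e :=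
    lap_aug_delete G hab
  have hLsym : Lᵀ = L := (augment G).isSymm_lapMatrix (R := ℝ)
  have hMsym : Mᵀ = M := mp_symm hLsym hM
  obtain ⟨z, hz⟩ := evec_mem_range G hne
  obtain ⟨m1, m2, m3, m4⟩ := hM
  set w := M *ᵥ e with hw
  set r := e ⬝ᵥ w with hrdef
  set c := 1 - r with hcdef
  have hwx : ∀ x, w x = M x (some a) - M x (some b) := fun x => mulVec_evec hne M x
  have hMba : M (some b) (some a) = M (some a) (some b) := by
    have h := congrFun (congrFun hMsym (some b)) (some a)
    rw [Matrix.transpose_apply] at h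
    exact h.symm
  have hrval : r = M (some a) (some a) - 2 * M (some a) (some b) + M (some b) (some b) := by
    calc r = w (some a) - w (some b) := dot_evec hne w
      _ = _ := by rw [hwx, hwx, hMba]; ring
  have hc0 : c ≠ 0 := by
    rw [hcdef, hrval]
    intro h
    exact hr (by linarith)
  have hz' : L *ᵥ z = e := hz
  have hLw : L *ᵥ w = e := by
    rw [hw, Matrix.mulVec_mulVec, ← hz', Matrix.mulVec_mulVec, m1]
  have hQcomm : M * L = L * M := by
    calc M * L = Mᵀ * Lᵀ := by rw [hMsym, hLsym]
      _ = (L * M)ᵀ := (transpose_mul L M).symm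
      _ = L * M := m3
  have hQe : (L * M) *ᵥ e = e := by
    rw [← Matrix.mulVec_mulVec, ← hw, hLw]
  have hQw : (L * M) *ᵥ w = w := by
    rw [← hQcomm, ← Matrix.mulVec_mulVec, hLw, ← hw]
  have hQM : (L * M) * M = M := by
    rw [← hQcomm]; exact m2
  have hQL : (L * M) * L = L := m1
  have hEM : Matrix.vecMulVec e e * M = Matrix.vecMulVec e w := by
    rw [vecMulVec_matmul, hMsym, ← hw]
  have hLWm : L * Matrix.vecMulVec w w = Matrix.vecMulVec e w := by
    rw [matmul_vecMulVec, hLw]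
  have hQWm : (L * M) * Matrix.vecMulVec w w = Matrix.vecMulVec w w := by
    rw [matmul_vecMulVec, hQw]
  have hQE : (L * M) * Matrix.vecMulVec e e = Matrix.vecMulVec e e := by
    rw [matmul_vecMulVec, hQe]
  set N := M + c⁻¹ • Matrix.vecMulVec w w with hNdef
  have hNsym : Nᵀ = N := by
    rw [hNdef, Matrix.transpose_add, Matrix.transpose_smul, vecMulVec_transpose, hMsym]
  have hL'sym : (L - Matrix.vecMulVec e e)ᵀ = L - Matrix.vecMulVec e e := by
    rw [Matrix.transpose_sub, hLsym, vecMulVec_transpose]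
  have hcoef : c⁻¹ - 1 - c⁻¹ * r = 0 := by
    have h := inv_mul_cancel₀ hc0
    calc c⁻¹ - 1 - c⁻¹ * r = c⁻¹ * (1 - r) - 1 := by ring
      _ = c⁻¹ * c - 1 := by rw [← hcdef]
      _ = 0 := by rw [h]; ring
  have hL'N : (L - Matrix.vecMulVec e e) * N = L * M := by
    rw [hNdef, Matrix.sub_mul, Matrix.mul_add, Matrix.mul_add, Matrix.mul_smul,
      Matrix.mul_smul, hLWm, hEM, _root_.vecMulVec_mul_vecMulVec, ← hrdef, smul_smul]
    calc L * M + c⁻¹ • Matrix.vecMulVec e w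
          - (Matrix.vecMulVec e w + (c⁻¹ * r) • Matrix.vecMulVec e w)
        = L * M + (c⁻¹ - 1 - c⁻¹ * r) • Matrix.vecMulVec e w := by
          rw [sub_smul, sub_smul, one_smul]; abel
      _ = L * M := by rw [hcoef, zero_smul, add_zero]
  have hNL' : N * (L - Matrix.vecMulVec e e) = L * M := by
    have h := congrArg Matrix.transpose hL'N
    rw [Matrix.transpose_mul, hNsym, hL'sym] at h
    rw [h]
    exact m3
  have hMP : IsMoorePenrose (L - Matrix.vecMulVec e e) N := by
    refine ⟨?_, ?_, ?_, ?_⟩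
    · rw [hL'N, Matrix.mul_sub, hQL, hQE]
    · rw [hNL', hNdef, Matrix.mul_add, Matrix.mul_smul, hQM, hQWm]
    · rw [hL'N]; exact m3
    · rw [hNL']; exact m3
  have hM'N : M' = N := by
    rw [hL'] at hM'
    exact mp_unique hM' hMP
  have hwnone : w none = M none (some a) - M none (some b) := hwx none
  rw [hM'N, hNdef]
  have hentry : (M + c⁻¹ • Matrix.vecMulVec w w) none none
      = M none none + c⁻¹ * (w none * w none) := by
    simp [Matrix.add_apply, Matrix.smul_apply, Matrix.vecMulVec_apply]
  rw [hentry, hwnone]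
  have hcval : c = 1 - (M (some a) (some a) - 2 * M (some a) (some b)
      + M (some b) (some b)) := by rw [hcdef, hrval]
  rw [← hcval, div_eq_mul_inv]
  ring
end
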